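/- arXiv:1606.04482 — 2 statements merged into one kernel-verified Lean document; each statement's English description precedes it below -/
import Mathlib

section
/- Let q and q₀ be positive integers, let χ be a Dirichlet character modulo q₀q that is not induced by any Dirichlet character modulo q, and let A be an integer with gcd(A, q) = 1. Then ∑_{A' mod q₀q, A' ≡ A (mod q)} χ(A') = 0, where the sum runs over all residue classes A' modulo q₀q that reduce to A modulo q. -/
open Finset
open scoped Classical

noncomputable section

/-- Lemma (vanishing of a restricted character sum): if `χ` is a Dirichlet
character mod `q₀q` that is not induced by any character mod `q` (i.e. it does
not agree with any character mod `q` on all integers coprime to `q₀q`), and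
`gcd(A, q) = 1`, then `∑_{A' mod q₀q, A' ≡ A (mod q)} χ(A') = 0`. -/
theorem stmt_13 (q q₀ : ℕ) (hq : 0 < q) (hq₀ : 0 < q₀)
    (χ : DirichletCharacter ℂ (q₀ * q))
    (hχ : ¬ ∃ χ' : DirichletCharacter ℂ q, ∀ n : ℕ, Nat.Coprime n (q₀ * q) →
      χ ((n : ℕ) : ZMod (q₀ * q)) = χ' ((n : ℕ) : ZMod q))
    (A : ℤ) (hA : Int.gcd (q : ℤ) A = 1) :
    ∑ a ∈ Finset.range (q₀ * q),
        (if ((a : ℤ) : ZMod q) = (A : ZMod q) then χ ((a : ℕ) : ZMod (q₀ * q)) else 0) = 0 := by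
  have hNpos : 0 < q₀ * q := Nat.mul_pos hq₀ hq
  haveI : NeZero (q₀ * q) := ⟨hNpos.ne'⟩
  have hdvd : q ∣ q₀ * q := dvd_mul_left q q₀
  -- `χ` does not factor through level `q`.
  have hFT : ¬ χ.FactorsThrough q := by
    rintro ⟨hd, χ', hχ'⟩
    refine hχ ⟨χ', fun n hn => ?_⟩
    have hu : IsUnit ((n : ℕ) : ZMod (q₀ * q)) := (ZMod.isUnit_iff_coprime n (q₀ * q)).mpr hn
    obtain ⟨u, hu⟩ := hu
    rw [hχ', ← hu, DirichletCharacter.changeLevel_eq_cast_of_dvd, hu]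
    congr 1
    exact ZMod.cast_natCast hdvd n
  -- Get a unit `u` mod `q₀*q` congruent to `1` mod `q` with `χ u ≠ 1`.
  obtain ⟨u, hu1, huχ⟩ :
      ∃ u : (ZMod (q₀ * q))ˣ, ZMod.unitsMap hdvd u = 1 ∧ χ.toUnitHom u ≠ 1 := by
    by_contra h
    push_neg at h
    exact hFT <| (DirichletCharacter.factorsThrough_iff_ker_unitsMap hdvd).mpr
      fun x hx => h x hx
  have hu1' : ZMod.castHom hdvd (ZMod q) (u : ZMod (q₀ * q)) = 1 := by
    have := congrArg (Units.val) hu1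
    simpa [ZMod.unitsMap_def] using this
  have huχ' : χ ((u : ZMod (q₀ * q))) ≠ 1 := by
    intro h
    exact huχ (Units.ext (by simpa [MulChar.coe_toUnitHom] using h))
  set f : ZMod (q₀ * q) → ℂ :=
    fun x => if ZMod.castHom hdvd (ZMod q) x = (A : ZMod q) then χ x else 0 with hf
  -- Rewrite the sum as a sum over `ZMod (q₀*q)`.
  have hsum : ∑ a ∈ Finset.range (q₀ * q),
      (if ((a : ℤ) : ZMod q) = (A : ZMod q) then χ ((a : ℕ) : ZMod (q₀ * q)) else 0)
      = ∑ x : ZMod (q₀ * q), f x := by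
    refine Finset.sum_nbij' (fun a => ((a : ℕ) : ZMod (q₀ * q))) (fun x => x.val)
      (fun a _ => Finset.mem_univ _) (fun x _ => Finset.mem_range.mpr (ZMod.val_lt x))
      (fun a ha => ZMod.val_natCast_of_lt (Finset.mem_range.mp ha))
      (fun x _ => ZMod.natCast_rightInverse x) ?_
    intro a _
    have h1 : ZMod.castHom hdvd (ZMod q) ((a : ℕ) : ZMod (q₀ * q)) = ((a : ℕ) : ZMod q) := by
      simp
    have h2 : (((a : ℕ) : ℤ) : ZMod q) = ((a : ℕ) : ZMod q) := by push_cast; ring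
    rw [hf]
    simp only [h1, h2]
  rw [hsum]
  -- Now use the substitution `x ↦ u * x`.
  have key : ∑ x : ZMod (q₀ * q), f x = χ (u : ZMod (q₀ * q)) * ∑ x : ZMod (q₀ * q), f x := by
    rw [Finset.mul_sum]
    refine (Fintype.sum_bijective (fun x => (u : ZMod (q₀ * q)) * x)
      (Units.mulLeft_bijective u) _ _ ?_).symm
    intro x
    have hc : ZMod.castHom hdvd (ZMod q) ((u : ZMod (q₀ * q)) * x)
        = ZMod.castHom hdvd (ZMod q) x := by
      rw [map_mul, hu1', one_mul]
    rw [hf]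
    simp only [hc]
    by_cases h : ZMod.castHom hdvd (ZMod q) x = (A : ZMod q)
    · simp [h, map_mul]
    · simp only [h, ↓reduceIte, mul_zero]
  have hfinal : (χ (u : ZMod (q₀ * q)) - 1) * ∑ x : ZMod (q₀ * q), f x = 0 := by
    linear_combination -key
  rcases mul_eq_zero.mp hfinal with h | h
  · exact absurd (sub_eq_zero.mp h) huχ'
  · exact h

end
end

section
/- Let a be a function assigning to each prime p a real number a_p ∈ [0,2], and suppose that for every α ∈ [0,2] the Sato–Tate law holds in the form lim_{x→∞} (log x / x)·#{p ≤ x prime : a_p ≤ α} = μ(α), where μ(α) = (2/π)·arcsin(α/2) + (1/π)·sin(2·arcsin(α/2)). Then liminf_{x→∞} (1/x)·∑_{p ≤ x} a_p·log p ≥ 8/(3π); in particular the liminf is strictly greater than 2/π. -/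
open Filter Finset

noncomputable section

/-- The set of primes in `[1, x]`. -/
def primesUpTo (x : ℝ) : Finset ℕ := (Finset.Icc 1 ⌊x⌋₊).filter Nat.Prime

/-- The Sato–Tate distribution function. -/
def STmu (α : ℝ) : ℝ :=
  (2 / Real.pi) * Real.arcsin (α / 2) + (1 / Real.pi) * Real.sin (2 * Real.arcsin (α / 2))

/-- antiderivative of `1 - STmu` -/
def STG (α : ℝ) : ℝ :=
  α - (4 / Real.pi) * ((α / 2) * Real.arcsin (α / 2) + Real.sqrt (1 - (α / 2) ^ 2))
    + (4 / (3 * Real.pi)) * (Real.sqrt (1 - (α / 2) ^ 2)) ^ 3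

lemma hasDerivAt_STmu {α : ℝ} (h : α ∈ Set.Ioo (-2 : ℝ) 2) :
    HasDerivAt STmu
      ((2 / Real.pi) * (1 / Real.sqrt (1 - (α/2)^2) * (1/2))
        + (1 / Real.pi) * (Real.cos (2 * Real.arcsin (α/2)) *
            (2 * (1 / Real.sqrt (1 - (α/2)^2) * (1/2))))) α := by
  have h1 : α / 2 ≠ -1 := by intro hc; have := h.1; rw [div_eq_iff (by norm_num : (2:ℝ) ≠ 0)] at hc; linarith
  have h2 : α / 2 ≠ 1 := by intro hc; have := h.2; rw [div_eq_iff (by norm_num : (2:ℝ) ≠ 0)] at hc; linarith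
  have hhalf : HasDerivAt (fun α : ℝ => α / 2) (1/2) α := (hasDerivAt_id α).div_const 2
  have hasin : HasDerivAt (fun α : ℝ => Real.arcsin (α / 2))
      (1 / Real.sqrt (1 - (α/2)^2) * (1/2)) α := by
    have := (Real.hasDerivAt_arcsin h1 h2).comp α hhalf; exact this
  have hsin : HasDerivAt (fun α : ℝ => Real.sin (2 * Real.arcsin (α / 2)))
      (Real.cos (2 * Real.arcsin (α/2)) * (2 * (1 / Real.sqrt (1 - (α/2)^2) * (1/2)))) α :=
    (hasin.const_mul 2).sin
  exact ((hasin.const_mul (2 / Real.pi)).add (hsin.const_mul (1 / Real.pi)))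

lemma sqrt_pos_of_mem {α : ℝ} (h : α ∈ Set.Ioo (-2 : ℝ) 2) : 0 < Real.sqrt (1 - (α/2)^2) := by
  apply Real.sqrt_pos.2; nlinarith [h.1, h.2]

lemma hasDerivAt_STG {α : ℝ} (h : α ∈ Set.Ioo (-2 : ℝ) 2) :
    HasDerivAt STG (1 - STmu α) α := by
  have h1 : α / 2 ≠ -1 := by intro hc; have := h.1; rw [div_eq_iff (by norm_num : (2:ℝ) ≠ 0)] at hc; linarith
  have h2 : α / 2 ≠ 1 := by intro hc; have := h.2; rw [div_eq_iff (by norm_num : (2:ℝ) ≠ 0)] at hc; linarith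
  have hs := sqrt_pos_of_mem h
  set s := Real.sqrt (1 - (α/2)^2) with hsdef
  have hs2 : s ^ 2 = 1 - (α/2)^2 := Real.sq_sqrt (by nlinarith [h.1, h.2])
  have hhalf : HasDerivAt (fun α : ℝ => α / 2) (1/2) α := (hasDerivAt_id α).div_const 2
  have hasin : HasDerivAt (fun α : ℝ => Real.arcsin (α / 2))
      (1 / s * (1/2)) α := by have := (Real.hasDerivAt_arcsin h1 h2).comp α hhalf; exact this
  have hinner : HasDerivAt (fun α : ℝ => 1 - (α/2)^2)
      (-(((2:ℕ) : ℝ) * (α/2) ^ 1 * (1/2))) α := (hhalf.pow 2).const_sub 1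
  have hsqrt : HasDerivAt (fun α : ℝ => Real.sqrt (1 - (α/2)^2))
      (1 / (2 * s) * (-(((2:ℕ):ℝ) * (α/2) ^ 1 * (1/2)))) α := by
    have := (Real.hasDerivAt_sqrt (x := 1 - (α/2)^2) (by nlinarith [h.1, h.2])).comp α hinner
    simpa [hsdef, Function.comp_def] using this
  have hcube : HasDerivAt (fun α : ℝ => (Real.sqrt (1 - (α/2)^2)) ^ 3)
      (((3:ℕ):ℝ) * s ^ 2 * (1 / (2 * s) * (-(((2:ℕ):ℝ) * (α/2) ^ 1 * (1/2))))) α := by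
    simpa [hsdef] using hsqrt.fun_pow 3
  have hprod : HasDerivAt (fun α : ℝ => (α / 2) * Real.arcsin (α / 2))
      (1/2 * Real.arcsin (α/2) + (α/2) * (1 / s * (1/2))) α := hhalf.mul hasin
  have htot := ((hasDerivAt_id α).sub ((hprod.add hsqrt).const_mul (4 / Real.pi))).add
      (hcube.const_mul (4 / (3 * Real.pi)))
  have hfun : STG = fun α : ℝ => (α - (4 / Real.pi) * ((α / 2) * Real.arcsin (α / 2)
      + Real.sqrt (1 - (α / 2) ^ 2))) + (4 / (3 * Real.pi)) * (Real.sqrt (1 - (α / 2) ^ 2)) ^ 3 := by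
    funext t; simp [STG]
  rw [hfun]
  refine htot.congr_deriv ?_
  have hsin2 : Real.sin (2 * Real.arcsin (α/2)) = 2 * (α/2) * s := by
    rw [Real.sin_two_mul, Real.sin_arcsin (by linarith [h.1]) (by linarith [h.2]), Real.cos_arcsin]
  simp only [STmu, hsin2]
  field_simp
  ring

lemma continuous_STmu : Continuous STmu := by
  have h : Continuous fun α : ℝ => Real.arcsin (α / 2) :=
    Real.continuous_arcsin.comp (continuous_id.div_const 2)
  exact (continuous_const.mul h).add
    (continuous_const.mul (Real.continuous_sin.comp (continuous_const.mul h)))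

lemma monotoneOn_STmu : MonotoneOn STmu (Set.Icc (-2 : ℝ) 2) := by
  apply monotoneOn_of_deriv_nonneg (convex_Icc _ _) continuous_STmu.continuousOn
  · intro x hx
    rw [interior_Icc] at hx
    exact (hasDerivAt_STmu hx).differentiableAt.differentiableWithinAt
  · intro x hx
    rw [interior_Icc] at hx
    rw [(hasDerivAt_STmu hx).deriv]
    have h1 : (0:ℝ) < Real.sqrt (1 - (x/2)^2) := Real.sqrt_pos.2 (by nlinarith [hx.1, hx.2])
    have h2 : -1 ≤ Real.cos (2 * Real.arcsin (x/2)) := Real.neg_one_le_cos _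
    have h3 : (0:ℝ) < Real.pi := Real.pi_pos
    have key : 0 ≤ (1/Real.pi) * (1 / Real.sqrt (1 - (x/2)^2)) *
        (1 + Real.cos (2 * Real.arcsin (x/2))) := by
      apply mul_nonneg (by positivity) (by linarith)
    have heq : (2 / Real.pi) * (1 / Real.sqrt (1 - (x/2)^2) * (1/2))
        + (1 / Real.pi) * (Real.cos (2 * Real.arcsin (x/2)) *
            (2 * (1 / Real.sqrt (1 - (x/2)^2) * (1/2))))
        = (1/Real.pi) * (1 / Real.sqrt (1 - (x/2)^2)) *
        (1 + Real.cos (2 * Real.arcsin (x/2))) := by ring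
    rw [heq]; exact key

lemma continuous_STG : Continuous STG := by
  have h : Continuous fun α : ℝ => Real.arcsin (α / 2) :=
    Real.continuous_arcsin.comp (continuous_id.div_const 2)
  have hs : Continuous fun α : ℝ => Real.sqrt (1 - (α / 2) ^ 2) := by fun_prop
  unfold STG
  continuity

lemma integral_one_sub_STmu :
    ∫ t in (0:ℝ)..2, (1 - STmu t) = 8 / (3 * Real.pi) := by
  have hπ := Real.pi_pos
  have h := intervalIntegral.integral_eq_sub_of_hasDeriv_right_of_le (a := (0:ℝ)) (b := 2)
    (f := STG) (f' := fun t => 1 - STmu t) (by norm_num)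
    continuous_STG.continuousOn
    (fun x hx => (hasDerivAt_STG ⟨by linarith [hx.1], hx.2⟩).hasDerivWithinAt)
    ((continuous_const.sub continuous_STmu).intervalIntegrable 0 2)
  rw [h]
  have h2 : STG 2 = 0 := by
    simp [STG, Real.arcsin_one]
    field_simp
    norm_num
  have h0 : STG 0 = -(8 / (3 * Real.pi)) := by
    simp [STG, Real.arcsin_zero, Real.sqrt_one]
    field_simp
    ring
  rw [h2, h0]; ring

lemma STmu_nonneg_on {t : ℝ} (ht : t ∈ Set.Icc (0:ℝ) 2) : 0 ≤ STmu t := by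
  have h0 : STmu 0 = 0 := by simp [STmu]
  have := monotoneOn_STmu (by constructor <;> norm_num : (0:ℝ) ∈ Set.Icc (-2:ℝ) 2)
    ⟨by linarith [ht.1], ht.2⟩ ht.1
  rw [h0] at this; exact this

/-- The Riemann-sum lower bound. -/
lemma riemann_bound {n : ℕ} (hn : 2 ≤ n) :
    8 / (3 * Real.pi) - 2 / n ≤ (2 / n) * ∑ i ∈ Finset.Ico 1 n, (1 - STmu (2 * i / n)) := by
  have hn0 : (0:ℝ) < n := by positivity
  have hint : ∀ a b : ℝ, IntervalIntegrable (fun t => 1 - STmu t) MeasureTheory.volume a b :=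
    fun a b => (continuous_const.sub continuous_STmu).intervalIntegrable a b
  -- partition points
  set g : ℝ → ℝ := fun t => 1 - STmu t with hg
  have hadj : ∑ i ∈ Finset.range n, (∫ t in (2*(i:ℝ)/n)..(2*((i:ℝ)+1)/n), g t)
      = ∫ t in (0:ℝ)..2, g t := by
    have := intervalIntegral.sum_integral_adjacent_intervals
      (a := fun i : ℕ => 2 * (i:ℝ) / n) (n := n) (f := g)
      (μ := MeasureTheory.volume) (fun k _ => hint _ _)
    simp only [Nat.cast_zero, mul_zero, zero_div] at this
    rw [show (2 * (n:ℝ) / n) = 2 by field_simp] at this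
    rw [← this]
    apply Finset.sum_congr rfl
    intro i _
    norm_num
  -- each term for i ≥ 1 bounded by (2/n) * g(2i/n)
  have hterm : ∀ i ∈ Finset.Ico 1 n, (∫ t in (2*(i:ℝ)/n)..(2*((i:ℝ)+1)/n), g t)
      ≤ (2/n) * g (2 * i / n) := by
    intro i hi
    rw [Finset.mem_Ico] at hi
    have hi1 : (1:ℝ) ≤ i := by exact_mod_cast hi.1
    have hi2 : (i:ℝ) + 1 ≤ n := by exact_mod_cast hi.2
    have hab : 2*(i:ℝ)/n ≤ 2*((i:ℝ)+1)/n := by gcongr <;> linarith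
    have hmemA : 2*(i:ℝ)/n ∈ Set.Icc (-2:ℝ) 2 := by
      constructor
      · have : (0:ℝ) ≤ 2*(i:ℝ)/n := by positivity
        linarith
      · rw [div_le_iff₀ hn0]; linarith
    have hmono : ∀ t ∈ Set.Icc (2*(i:ℝ)/n) (2*((i:ℝ)+1)/n), g t ≤ g (2*(i:ℝ)/n) := by
      intro t ht
      have htm : t ∈ Set.Icc (-2:ℝ) 2 := by
        constructor
        · have : (0:ℝ) ≤ 2*(i:ℝ)/n := by positivity
          linarith [ht.1]
        · have : 2*((i:ℝ)+1)/n ≤ 2 := by rw [div_le_iff₀ hn0]; linarith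
          linarith [ht.2]
      have := monotoneOn_STmu hmemA htm ht.1
      simp only [hg]; linarith
    calc (∫ t in (2*(i:ℝ)/n)..(2*((i:ℝ)+1)/n), g t)
        ≤ ∫ _ in (2*(i:ℝ)/n)..(2*((i:ℝ)+1)/n), g (2*(i:ℝ)/n) := by
          apply intervalIntegral.integral_mono_on hab (hint _ _) intervalIntegrable_const hmono
      _ = (2/n) * g (2*(i:ℝ)/n) := by
          rw [intervalIntegral.integral_const, smul_eq_mul]
          congr 1
          field_simp
          ring
  -- first interval bounded by 2/n
  have hfirst : (∫ t in (2*(0:ℝ)/n)..(2*((0:ℝ)+1)/n), g t) ≤ 2/n := by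
    have h01 : 2*(0:ℝ)/n = 0 := by ring
    have h02 : 2*((0:ℝ)+1)/n = 2/n := by ring
    rw [h01, h02]
    have hn1 : (2:ℝ) ≤ n := by exact_mod_cast hn
    have hn2 : 2/(n:ℝ) ≤ 2 := by rw [div_le_iff₀ hn0]; nlinarith
    calc (∫ t in (0:ℝ)..(2/n), g t) ≤ ∫ _ in (0:ℝ)..(2/n), (1:ℝ) := by
          apply intervalIntegral.integral_mono_on (by positivity) (hint _ _)
            intervalIntegrable_const
          intro t ht
          have : 0 ≤ STmu t := STmu_nonneg_on ⟨ht.1, le_trans ht.2 hn2⟩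
          simp only [hg]; linarith
      _ = 2/n := by rw [intervalIntegral.integral_const, smul_eq_mul]; ring
  -- combine
  have hsplit : ∑ i ∈ Finset.range n, (∫ t in (2*(i:ℝ)/n)..(2*((i:ℝ)+1)/n), g t)
      = (∫ t in (2*(0:ℝ)/n)..(2*((0:ℝ)+1)/n), g t)
        + ∑ i ∈ Finset.Ico 1 n, (∫ t in (2*(i:ℝ)/n)..(2*((i:ℝ)+1)/n), g t) := by
    rw [Finset.range_eq_Ico, Finset.sum_eq_sum_Ico_succ_bot (by omega : 0 < n)]
    norm_num
  have hI : ∫ t in (0:ℝ)..2, g t = 8 / (3 * Real.pi) := integral_one_sub_STmu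
  have hsum : ∑ i ∈ Finset.Ico 1 n, (∫ t in (2*(i:ℝ)/n)..(2*((i:ℝ)+1)/n), g t)
      ≤ ∑ i ∈ Finset.Ico 1 n, (2/n) * g (2*(i:ℝ)/n) := Finset.sum_le_sum hterm
  rw [Finset.mul_sum]
  have : ∑ i ∈ Finset.Ico 1 n, (2/n) * g (2*(i:ℝ)/n)
      = ∑ i ∈ Finset.Ico 1 n, 2/(n:ℝ) * (1 - STmu (2 * i / n)) := by
    apply Finset.sum_congr rfl; intro i _; rfl
  linarith [hadj, hsplit, hI, hsum, this.symm.le, this.le]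

lemma prime_of_mem {p : ℕ} {x : ℝ} (hp : p ∈ primesUpTo x) : p.Prime :=
  (Finset.mem_filter.1 hp).2

lemma one_le_of_mem {p : ℕ} {x : ℝ} (hp : p ∈ primesUpTo x) : 1 ≤ p :=
  (Finset.mem_Icc.1 (Finset.mem_filter.1 hp).1).1

lemma le_of_mem {p : ℕ} {x : ℝ} (hx : 0 ≤ x) (hp : p ∈ primesUpTo x) : (p : ℝ) ≤ x := by
  have h := (Finset.mem_Icc.1 (Finset.mem_filter.1 hp).1).2
  calc (p:ℝ) ≤ (⌊x⌋₊ : ℝ) := by exact_mod_cast h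
    _ ≤ x := Nat.floor_le hx

/-- per-p level-count bound -/
lemma level_count_le {n : ℕ} (hn : 1 ≤ n) {c : ℝ} (hc0 : 0 ≤ c) :
    (2 / n) * ((Finset.Ico 1 n).filter (fun i : ℕ => (2 * i / n : ℝ) < c)).card ≤ c := by
  have hn0 : (0:ℝ) < n := by positivity
  have hsub : (Finset.Ico 1 n).filter (fun i : ℕ => (2 * i / n : ℝ) < c)
      ⊆ Finset.Icc 1 ⌊(n : ℝ) * c / 2⌋₊ := by
    intro i hi
    rw [Finset.mem_filter, Finset.mem_Ico] at hi
    rw [Finset.mem_Icc]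
    refine ⟨hi.1.1, Nat.le_floor ?_⟩
    have := hi.2
    rw [div_lt_iff₀ hn0] at this
    rw [le_div_iff₀ (by norm_num : (0:ℝ) < 2)]
    nlinarith
  have hcard : (((Finset.Ico 1 n).filter (fun i : ℕ => (2 * i / n : ℝ) < c)).card : ℝ)
      ≤ (⌊(n : ℝ) * c / 2⌋₊ : ℝ) := by
    exact_mod_cast Finset.card_le_card hsub |>.trans (by simp [Nat.card_Icc])
  have hfl : (⌊(n : ℝ) * c / 2⌋₊ : ℝ) ≤ (n : ℝ) * c / 2 := Nat.floor_le (by positivity)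
  calc (2 / (n:ℝ)) * _ ≤ (2 / n) * ((n:ℝ) * c / 2) := by
        apply mul_le_mul_of_nonneg_left (hcard.trans hfl) (by positivity)
    _ = c := by field_simp

lemma tendsto_transfer {c : ℝ → ℝ} {L ε : ℝ} (hε : 0 < ε)
    (h : Tendsto (fun x => Real.log x / x * c x) atTop (nhds L)) :
    Tendsto (fun x => Real.log (ε * x) / x * c x) atTop (nhds L) := by
  have hinv : Tendsto (fun x : ℝ => (Real.log x)⁻¹) atTop (nhds 0) :=
    tendsto_inv_atTop_zero.comp Real.tendsto_log_atTop
  have hmain : Tendsto (fun x => (Real.log x / x * c x)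
      + Real.log ε * ((Real.log x / x * c x) * (Real.log x)⁻¹)) atTop (nhds (L + Real.log ε * (L * 0))) :=
    h.add (tendsto_const_nhds.mul (h.mul hinv))
  rw [show L + Real.log ε * (L * 0) = L by ring] at hmain
  apply hmain.congr'
  filter_upwards [eventually_gt_atTop (1:ℝ)] with x hx
  have hx0 : (0:ℝ) < x := by linarith
  have hlx : Real.log x ≠ 0 := ne_of_gt (Real.log_pos hx)
  rw [Real.log_mul (ne_of_gt hε) (ne_of_gt hx0)]
  field_simp
  ring

lemma tendsto_eps_pnt {ε : ℝ} (hε : 0 < ε)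
    (hPNT : Tendsto (fun x => Real.log x / x * ((primesUpTo x).card : ℝ)) atTop (nhds 1)) :
    Tendsto (fun x => Real.log (ε * x) / x * ((primesUpTo (ε * x)).card : ℝ)) atTop (nhds ε) := by
  have hcomp : Tendsto (fun x => Real.log (ε * x) / (ε * x) * ((primesUpTo (ε * x)).card : ℝ))
      atTop (nhds 1) := hPNT.comp (Filter.tendsto_id.const_mul_atTop hε)
  have hmul : Tendsto (fun x => ε * (Real.log (ε * x) / (ε * x) * ((primesUpTo (ε * x)).card : ℝ)))
      atTop (nhds (ε * 1)) := tendsto_const_nhds.mul hcomp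
  rw [mul_one] at hmul
  apply hmul.congr'
  filter_upwards [eventually_gt_atTop (0:ℝ)] with x hx
  field_simp

lemma key_ineq (a : ℕ → ℝ) (ha : ∀ p : ℕ, p.Prime → a p ∈ Set.Icc (0 : ℝ) 2)
    {n : ℕ} (hn : 2 ≤ n) {ε x : ℝ} (hε : 0 < ε) (hx : 1 ≤ x) (hεx : 1 ≤ ε * x) :
    (2 / n) * ∑ i ∈ Finset.Ico 1 n, (Real.log (ε * x) / x *
        (((primesUpTo x).card : ℝ)
          - (((primesUpTo x).filter (fun p => a p ≤ 2 * i / n)).card : ℝ)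
          - ((primesUpTo (ε * x)).card : ℝ)))
      ≤ (1 / x) * ∑ p ∈ primesUpTo x, a p * Real.log p := by
  have hx0 : (0:ℝ) < x := by linarith
  have hεx0 : (0:ℝ) < ε * x := by linarith
  have hlog : 0 ≤ Real.log (ε * x) := Real.log_nonneg hεx
  set P := primesUpTo x with hP
  set Q := P.filter (fun p : ℕ => ε * x < (p : ℝ)) with hQ
  have hanneg : ∀ p ∈ P, 0 ≤ a p := fun p hp => (ha p (prime_of_mem hp)).1
  -- step 1
  have step1 : ∀ i ∈ Finset.Ico 1 n,
      ((P.card : ℝ) - ((P.filter (fun p => a p ≤ 2 * i / n)).card : ℝ)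
        - ((primesUpTo (ε * x)).card : ℝ))
      ≤ ((Q.filter (fun p : ℕ => (2 * i / n : ℝ) < a p)).card : ℝ) := by
    intro i _
    have hsplit : (P.filter (fun p => a p ≤ 2 * i / n)).card
        + (P.filter (fun p => ¬ a p ≤ 2 * i / n)).card = P.card :=
      Finset.card_filter_add_card_filter_not _
    have hsub : P.filter (fun p => ¬ a p ≤ 2 * i / n)
        ⊆ (Q.filter (fun p : ℕ => (2 * i / n : ℝ) < a p))
          ∪ P.filter (fun p : ℕ => (p : ℝ) ≤ ε * x) := by
      intro p hp
      rw [Finset.mem_filter] at hp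
      rcases lt_or_ge (ε * x) (p : ℝ) with h | h
      · exact Finset.mem_union_left _ (by
          rw [Finset.mem_filter, hQ, Finset.mem_filter]
          exact ⟨⟨hp.1, h⟩, not_le.1 hp.2⟩)
      · exact Finset.mem_union_right _ (Finset.mem_filter.2 ⟨hp.1, h⟩)
    have hsmall : P.filter (fun p : ℕ => (p : ℝ) ≤ ε * x) ⊆ primesUpTo (ε * x) := by
      intro p hp
      rw [Finset.mem_filter] at hp
      have : p ∈ (Finset.Icc 1 ⌊ε * x⌋₊).filter Nat.Prime :=
        Finset.mem_filter.2 ⟨Finset.mem_Icc.2 ⟨one_le_of_mem hp.1, Nat.le_floor hp.2⟩,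
          prime_of_mem hp.1⟩
      exact this
    have h1 : (P.filter (fun p => ¬ a p ≤ 2 * i / n)).card
        ≤ (Q.filter (fun p : ℕ => (2 * i / n : ℝ) < a p)).card + (primesUpTo (ε * x)).card :=
      (Finset.card_le_card hsub).trans
        ((Finset.card_union_le _ _).trans (by gcongr <;> exact Finset.card_le_card hsmall))
    have h1' : ((P.filter (fun p => ¬ a p ≤ 2 * i / n)).card : ℝ)
        ≤ ((Q.filter (fun p : ℕ => (2 * i / n : ℝ) < a p)).card : ℝ)
          + ((primesUpTo (ε * x)).card : ℝ) := by exact_mod_cast h1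
    have heq : (P.card : ℝ) = ((P.filter (fun p => a p ≤ 2 * i / n)).card : ℝ)
        + ((P.filter (fun p => ¬ a p ≤ 2 * i / n)).card : ℝ) := by exact_mod_cast hsplit.symm
    linarith
  -- step 2
  have step2 : (2 / (n:ℝ)) * ∑ i ∈ Finset.Ico 1 n,
      ((Q.filter (fun p : ℕ => (2 * i / n : ℝ) < a p)).card : ℝ) ≤ ∑ p ∈ Q, a p := by
    have hswap : ∑ i ∈ Finset.Ico 1 n, (Q.filter (fun p : ℕ => (2 * i / n : ℝ) < a p)).card
        = ∑ p ∈ Q, ((Finset.Ico 1 n).filter (fun i : ℕ => (2 * i / n : ℝ) < a p)).card := by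
      simp only [Finset.card_filter]
      rw [Finset.sum_comm]
    have hswapR : ∑ i ∈ Finset.Ico 1 n,
        ((Q.filter (fun p : ℕ => (2 * i / n : ℝ) < a p)).card : ℝ)
        = ∑ p ∈ Q, (((Finset.Ico 1 n).filter (fun i : ℕ => (2 * i / n : ℝ) < a p)).card : ℝ) := by
      exact_mod_cast congrArg (Nat.cast : ℕ → ℝ) hswap
    rw [hswapR, Finset.mul_sum]
    apply Finset.sum_le_sum
    intro p hp
    have hprime : p.Prime := prime_of_mem (Finset.filter_subset _ _ hp)
    exact level_count_le (by omega) ((ha p hprime).1)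
  -- step 3
  have step3 : Real.log (ε * x) * ∑ p ∈ Q, a p ≤ ∑ p ∈ Q, a p * Real.log p := by
    rw [Finset.mul_sum]
    apply Finset.sum_le_sum
    intro p hp
    rw [Finset.mem_filter] at hp
    have hap : 0 ≤ a p := hanneg p hp.1
    have hlogp : Real.log (ε * x) ≤ Real.log p := Real.log_le_log hεx0 (le_of_lt hp.2)
    calc Real.log (ε * x) * a p = a p * Real.log (ε * x) := by ring
      _ ≤ a p * Real.log p := mul_le_mul_of_nonneg_left hlogp hap
  -- step 4
  have step4 : ∑ p ∈ Q, a p * Real.log p ≤ ∑ p ∈ P, a p * Real.log p := by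
    apply Finset.sum_le_sum_of_subset_of_nonneg (Finset.filter_subset _ _)
    intro p hp _
    have h1p : (1:ℝ) ≤ p := by exact_mod_cast one_le_of_mem hp
    exact mul_nonneg (hanneg p hp) (Real.log_nonneg h1p)
  -- assemble
  have hfactor : (2 / (n:ℝ)) * ∑ i ∈ Finset.Ico 1 n, (Real.log (ε * x) / x *
        ((P.card : ℝ) - ((P.filter (fun p => a p ≤ 2 * i / n)).card : ℝ)
          - ((primesUpTo (ε * x)).card : ℝ)))
      = (Real.log (ε * x) / x) * ((2 / n) * ∑ i ∈ Finset.Ico 1 n,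
        ((P.card : ℝ) - ((P.filter (fun p => a p ≤ 2 * i / n)).card : ℝ)
          - ((primesUpTo (ε * x)).card : ℝ))) := by
    simp only [Finset.mul_sum]
    apply Finset.sum_congr rfl
    intro i _
    ring
  rw [hfactor]
  have hnn : (0:ℝ) ≤ Real.log (ε * x) / x := by positivity
  calc (Real.log (ε * x) / x) * ((2 / (n:ℝ)) * ∑ i ∈ Finset.Ico 1 n,
        ((P.card : ℝ) - ((P.filter (fun p => a p ≤ 2 * i / n)).card : ℝ)
          - ((primesUpTo (ε * x)).card : ℝ)))
      ≤ (Real.log (ε * x) / x) * ((2 / n) * ∑ i ∈ Finset.Ico 1 n,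
        ((Q.filter (fun p : ℕ => (2 * i / n : ℝ) < a p)).card : ℝ)) := by
        apply mul_le_mul_of_nonneg_left _ hnn
        apply mul_le_mul_of_nonneg_left (Finset.sum_le_sum step1) (by positivity)
    _ ≤ (Real.log (ε * x) / x) * ∑ p ∈ Q, a p := mul_le_mul_of_nonneg_left step2 hnn
    _ = (1 / x) * (Real.log (ε * x) * ∑ p ∈ Q, a p) := by ring
    _ ≤ (1 / x) * ∑ p ∈ Q, a p * Real.log p := by
        apply mul_le_mul_of_nonneg_left step3 (by positivity)
    _ ≤ (1 / x) * ∑ p ∈ P, a p * Real.log p := by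
        apply mul_le_mul_of_nonneg_left step4 (by positivity)

/-- If `a_p ∈ [0,2]` satisfies the Sato–Tate law
`(log x / x)·#{p ≤ x : a_p ≤ α} → μ(α)`, then
`liminf_{x→∞} (1/x) ∑_{p ≤ x} a_p log p ≥ 8/(3π) > 2/π`. -/
theorem stmt_15 (a : ℕ → ℝ)
    (ha : ∀ p : ℕ, p.Prime → a p ∈ Set.Icc (0 : ℝ) 2)
    (hST : ∀ α ∈ Set.Icc (0 : ℝ) 2,
      Tendsto (fun x : ℝ => (Real.log x / x) *
          (((primesUpTo x).filter (fun p => a p ≤ α)).card : ℝ))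
        atTop (nhds (STmu α))) :
    8 / (3 * Real.pi) ≤
      Filter.liminf (fun x : ℝ => (1 / x) * ∑ p ∈ primesUpTo x, a p * Real.log p) atTop ∧
    2 / Real.pi <
      Filter.liminf (fun x : ℝ => (1 / x) * ∑ p ∈ primesUpTo x, a p * Real.log p) atTop := by
  have hπ : (0:ℝ) < Real.pi := Real.pi_pos
  set S : ℝ → ℝ := fun x => (1 / x) * ∑ p ∈ primesUpTo x, a p * Real.log p with hS
  -- PNT from the hypothesis at α = 2
  have hfilter2 : ∀ x : ℝ, (primesUpTo x).filter (fun p => a p ≤ 2) = primesUpTo x :=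
    fun x => Finset.filter_true_of_mem (fun p hp => (ha p (prime_of_mem hp)).2)
  have hSTmu2 : STmu 2 = 1 := by
    rw [STmu, show (2:ℝ)/2 = 1 by norm_num, Real.arcsin_one,
      show 2 * (Real.pi / 2) = Real.pi by ring, Real.sin_pi]
    field_simp
    simp
  have hPNT : Tendsto (fun x => Real.log x / x * ((primesUpTo x).card : ℝ)) atTop (nhds 1) := by
    have := hST 2 ⟨by norm_num, le_refl 2⟩
    rw [hSTmu2] at this
    simpa only [hfilter2] using this
  -- upper bound for coboundedness
  have hub : ∀ᶠ x : ℝ in atTop, S x ≤ 3 := by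
    have h2 : Tendsto (fun x => 2 * (Real.log x / x * ((primesUpTo x).card : ℝ)))
        atTop (nhds (2 * 1)) := tendsto_const_nhds.mul hPNT
    rw [mul_one] at h2
    filter_upwards [h2.eventually_le_const (by norm_num : (2:ℝ) < 3),
      eventually_ge_atTop (1:ℝ)] with x h3 hx1
    have hx0 : (0:ℝ) < x := by linarith
    have hsum : ∑ p ∈ primesUpTo x, a p * Real.log p
        ≤ ((primesUpTo x).card : ℝ) * (2 * Real.log x) := by
      have hb := Finset.sum_le_card_nsmul (primesUpTo x) (fun p => a p * Real.log p)
        (2 * Real.log x) ?_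
      · simpa [nsmul_eq_mul] using hb
      · intro p hp
        have hp1 : (1:ℝ) ≤ (p:ℝ) := by exact_mod_cast one_le_of_mem hp
        have hlp : 0 ≤ Real.log p := Real.log_nonneg hp1
        have hlx : Real.log p ≤ Real.log x := Real.log_le_log (by linarith) (le_of_mem (by linarith) hp)
        have hap := ha p (prime_of_mem hp)
        calc a p * Real.log p ≤ 2 * Real.log p :=
              mul_le_mul_of_nonneg_right hap.2 hlp
          _ ≤ 2 * Real.log x := by linarith
    calc S x ≤ (1/x) * (((primesUpTo x).card : ℝ) * (2 * Real.log x)) := by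
          apply mul_le_mul_of_nonneg_left hsum (by positivity)
      _ = 2 * (Real.log x / x * ((primesUpTo x).card : ℝ)) := by field_simp
      _ ≤ 3 := h3
  -- coboundedness
  have hcobdd : IsCoboundedUnder (· ≥ ·) atTop S :=
    Filter.isCoboundedUnder_ge_of_eventually_le atTop hub
  -- the main lower bound
  have hmain : ∀ η : ℝ, 0 < η → 8 / (3 * Real.pi) - η ≤ Filter.liminf S atTop := by
    intro η hη
    set n : ℕ := ⌈(8:ℝ)/η⌉₊ + 2 with hn
    have hn2 : 2 ≤ n := by omega
    have hnR : (8:ℝ)/η ≤ n := by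
      calc (8:ℝ)/η ≤ ⌈(8:ℝ)/η⌉₊ := Nat.le_ceil _
        _ ≤ n := by exact_mod_cast Nat.le_add_right _ 2
    have hn0 : (0:ℝ) < n := by positivity
    have hn4 : 2 / (n:ℝ) ≤ η / 4 := by
      rw [div_le_div_iff₀ hn0 (by norm_num)]
      have : (8:ℝ) ≤ η * n := by
        rw [div_le_iff₀ hη] at hnR
        linarith [hnR]
      linarith
    set ε : ℝ := η / 8 with hε
    have hε0 : (0:ℝ) < ε := by positivity
    -- the comparison function and its limit
    set f : ℝ → ℝ := fun x => (2 / n) * ∑ i ∈ Finset.Ico 1 n, (Real.log (ε * x) / x *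
        (((primesUpTo x).card : ℝ)
          - (((primesUpTo x).filter (fun p => a p ≤ 2 * i / n)).card : ℝ)
          - ((primesUpTo (ε * x)).card : ℝ))) with hf
    have hterm : ∀ i ∈ Finset.Ico 1 n, Tendsto (fun x => Real.log (ε * x) / x *
        (((primesUpTo x).card : ℝ)
          - (((primesUpTo x).filter (fun p => a p ≤ 2 * i / n)).card : ℝ)
          - ((primesUpTo (ε * x)).card : ℝ))) atTop
        (nhds (1 - STmu (2 * i / n) - ε)) := by
      intro i hi
      rw [Finset.mem_Ico] at hi
      have hmem : (2 * (i:ℝ) / n) ∈ Set.Icc (0:ℝ) 2 := by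
        constructor
        · positivity
        · rw [div_le_iff₀ hn0]
          have : (i:ℝ) ≤ n := by exact_mod_cast le_of_lt hi.2
          linarith
      have h1 : Tendsto (fun x => Real.log (ε * x) / x * ((primesUpTo x).card : ℝ))
          atTop (nhds 1) := tendsto_transfer hε0 hPNT
      have h2 : Tendsto (fun x => Real.log (ε * x) / x *
          (((primesUpTo x).filter (fun p => a p ≤ 2 * i / n)).card : ℝ))
          atTop (nhds (STmu (2 * i / n))) := tendsto_transfer hε0 (hST _ hmem)
      have h3 := tendsto_eps_pnt hε0 hPNT
      have := (h1.sub h2).sub h3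
      apply this.congr
      intro x
      ring
    have hflim : Tendsto f atTop (nhds ((2 / n) * ∑ i ∈ Finset.Ico 1 n,
        (1 - STmu (2 * i / n) - ε))) :=
      tendsto_const_nhds.mul (tendsto_finset_sum _ hterm)
    -- limit value is at least 8/(3π) - 3η/4
    have hval : 8 / (3 * Real.pi) - 3 * η / 4 ≤ (2 / (n:ℝ)) * ∑ i ∈ Finset.Ico 1 n,
        (1 - STmu (2 * i / n) - ε) := by
      have hrb := riemann_bound hn2
      have hsplit : (2 / (n:ℝ)) * ∑ i ∈ Finset.Ico 1 n, (1 - STmu (2 * i / n) - ε)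
          = (2 / n) * ∑ i ∈ Finset.Ico 1 n, (1 - STmu (2 * i / n))
            - (2 / n) * (n - 1 : ℕ) * ε := by
        rw [Finset.sum_sub_distrib, Finset.sum_const, Nat.card_Ico, mul_sub, nsmul_eq_mul]
        ring
      rw [hsplit]
      have hcount : (2 / (n:ℝ)) * ((n - 1 : ℕ) : ℝ) * ε ≤ 2 * ε := by
        have h1 : ((n - 1 : ℕ) : ℝ) ≤ (n:ℝ) := by
          have : (n - 1 : ℕ) ≤ n := Nat.sub_le _ _
          exact_mod_cast this
        calc (2 / (n:ℝ)) * ((n - 1 : ℕ) : ℝ) * ε ≤ (2 / (n:ℝ)) * (n:ℝ) * ε := by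
              apply mul_le_mul_of_nonneg_right _ (le_of_lt hε0)
              apply mul_le_mul_of_nonneg_left h1 (by positivity)
          _ = 2 * ε := by field_simp
      have hεval : 2 * ε = η / 4 := by rw [hε]; ring
      linarith
    -- eventually f ≤ S
    have hev : ∀ᶠ x : ℝ in atTop, f x ≤ S x := by
      filter_upwards [eventually_ge_atTop (1:ℝ), eventually_ge_atTop (1/ε)] with x hx1 hx2
      have hεx : 1 ≤ ε * x := by
        rw [div_le_iff₀ hε0] at hx2
        linarith [hx2]
      exact key_ineq a ha hn2 hε0 hx1 hεx
    -- conclude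
    have hflow : ∀ᶠ x : ℝ in atTop, 8 / (3 * Real.pi) - η ≤ f x := by
      have := hflim.eventually_const_le (v := (2 / (n:ℝ)) * ∑ i ∈ Finset.Ico 1 n,
        (1 - STmu (2 * i / n) - ε)) (u := 8 / (3 * Real.pi) - η) (by linarith)
      exact this
    apply Filter.le_liminf_of_le hcobdd
    filter_upwards [hflow, hev] with x h1 h2
    linarith
  have h83 : 8 / (3 * Real.pi) ≤ Filter.liminf S atTop := by
    apply le_of_forall_sub_le
    intro η hη
    exact hmain η hη
  refine ⟨h83, lt_of_lt_of_le ?_ h83⟩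
  rw [div_lt_div_iff₀ hπ (by positivity)]
  nlinarith

end
end
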